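/- arXiv:2002.06705 — 3 statements merged into one kernel-verified Lean document; each statement's English description precedes it below -/
import Mathlib

section
/- Assuming the Continuum Hypothesis, there exists a sequence ⟨p_η : η < ω₁⟩ of functions p_η : η → ω such that for every η < ω₁, the set {p_β ↾ η : β > η} equals all of ω^η (the set of all functions from η to ω). -/
open Cardinal Ordinal

lemma CH_transfer (h : (2 : Cardinal.{u}) ^ Cardinal.aleph0 = Cardinal.aleph 1) :
    (2 : Cardinal.{v}) ^ Cardinal.aleph0 = Cardinal.aleph 1 := by
  have h1 := congrArg Cardinal.lift.{v} h
  rw [Cardinal.lift_power, Cardinal.lift_two, Cardinal.lift_aleph0, Cardinal.lift_aleph,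
    Ordinal.lift_one] at h1
  apply Cardinal.lift_injective.{u}
  rw [Cardinal.lift_power, Cardinal.lift_two, Cardinal.lift_aleph0, Cardinal.lift_aleph,
    Ordinal.lift_one]
  exact h1

universe u

noncomputable abbrev Om : Type u := (Cardinal.aleph 1 : Cardinal.{u}).ord.ToType

lemma sierpinski_aux
    (hCH : (2 : Cardinal.{u}) ^ Cardinal.aleph0 = Cardinal.aleph 1) :
    ∃ p : ∀ η : (Cardinal.aleph 1 : Cardinal.{u}).ord.ToType, ({x // x < η} → ℕ),
      ∀ η : (Cardinal.aleph 1 : Cardinal.{u}).ord.ToType, ∀ g : {x // x < η} → ℕ,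
        ∃ β, ∃ hβ : η < β, ∀ x : {x // x < η}, p β ⟨x.1, x.2.trans hβ⟩ = g x := by
  classical
  have hmkOm : #Om = (Cardinal.aleph 1 : Cardinal.{u}) := by
    rw [Cardinal.mk_toType, Cardinal.card_ord]
  have hsmall : ∀ η : Om, #{x : Om // x < η} ≤ Cardinal.aleph0 := by
    intro η
    have h1 : #{x : Om // x < η} < (Cardinal.aleph 1 : Cardinal.{u}) :=
      Cardinal.mk_Iio_ord_toType η
    exact Order.lt_succ_iff.mp (h1.trans_eq Cardinal.succ_aleph0.symm)
  have hT : #(Σ η : Om, ({x : Om // x < η} → ℕ)) ≤ (Cardinal.aleph 1 : Cardinal.{u}) := by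
    rw [Cardinal.mk_sigma]
    calc Cardinal.sum (fun η : Om => #({x : Om // x < η} → ℕ))
        ≤ Cardinal.sum (fun _ : Om => (Cardinal.aleph 1 : Cardinal.{u})) := by
          apply Cardinal.sum_le_sum
          intro η
          have hb : #({x : Om // x < η} → ℕ) ≤ Cardinal.aleph0 ^ Cardinal.aleph0 := by
            rw [Cardinal.mk_arrow]
            simp only [Cardinal.mk_nat, Cardinal.lift_aleph0]
            refine Cardinal.power_le_power_left Cardinal.aleph0_ne_zero ?_
            calc Cardinal.lift #{x : Om // x < η} ≤ Cardinal.lift Cardinal.aleph0 :=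
                  Cardinal.lift_le.mpr (hsmall η)
              _ = Cardinal.aleph0 := Cardinal.lift_aleph0
          exact hb.trans (by rw [Cardinal.power_self_eq le_rfl, hCH])
      _ = #Om * (Cardinal.aleph 1 : Cardinal.{u}) := Cardinal.sum_const' _ _
      _ = (Cardinal.aleph 1 : Cardinal.{u}) := by
          rw [hmkOm]; exact Cardinal.mul_eq_self Cardinal.aleph0_lt_aleph_one.le
  have hOmne : Nonempty Om := by
    rw [← Cardinal.mk_ne_zero_iff, hmkOm]
    exact (Cardinal.aleph0_lt_aleph_one.trans_le' (by simp)).ne'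
  obtain ⟨i⟩ : Nonempty ((Σ η : Om, ({x : Om // x < η} → ℕ)) ↪ Om) :=
    Cardinal.le_def _ _ |>.mp (hT.trans_eq hmkOm.symm)
  have hTne : Nonempty (Σ η : Om, ({x : Om // x < η} → ℕ)) :=
    ⟨⟨Classical.arbitrary Om, fun _ => 0⟩⟩
  set f0 : Om → (Σ η : Om, ({x : Om // x < η} → ℕ)) := Function.invFun i with hf0def
  have hf0 : ∀ t, f0 (i t) = t := Function.leftInverse_invFun i.injective
  obtain ⟨j⟩ : Nonempty (Om ≃ Om × Om) := by
    rw [← Cardinal.eq]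
    simp [Cardinal.mk_prod, hmkOm, Cardinal.mul_eq_self Cardinal.aleph0_lt_aleph_one.le]
  refine ⟨fun β x => if h : x.1 < (f0 (j β).2).1 then (f0 (j β).2).2 ⟨x.1, h⟩ else 0, ?_⟩
  intro η g
  have key : ∃ β : Om, η < β ∧ (j β).2 = i ⟨η, g⟩ := by
    by_contra hcon
    push_neg at hcon
    have hinj : Function.Injective (fun a : Om =>
        (⟨j.symm (a, i ⟨η, g⟩), by
          by_contra hlt
          exact hcon _ (not_le.mp hlt) (by simp)⟩ : Set.Iic η)) := by
      intro a b hab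
      have := congrArg (fun z : Set.Iic η => j (z.1)) hab
      simpa using this
    have h1 : (Cardinal.aleph 1 : Cardinal.{u}) ≤ #(Set.Iic η) := by
      exact hmkOm.symm.trans_le (Cardinal.mk_le_of_injective hinj)
    have hIic : Set.Iic η = Set.Iio η ∪ {η} := by
      ext z; simp [le_iff_lt_or_eq]
    have h2 : #(Set.Iic η) ≤ #(Set.Iio η) + 1 := by
      rw [hIic]
      refine (Cardinal.mk_union_le _ _).trans ?_
      simp
    have h3 : #(Set.Iio η) + 1 ≤ Cardinal.aleph0 := by
      calc #(Set.Iio η) + 1 ≤ Cardinal.aleph0 + 1 := by gcongr; exact hsmall η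
        _ = Cardinal.aleph0 := by simp
    exact absurd ((h1.trans h2).trans h3) (not_le.mpr Cardinal.aleph0_lt_aleph_one)
  obtain ⟨β, hβ, hj⟩ := key
  have hfb : f0 (j β).2 = (⟨η, g⟩ : Σ η : Om, ({x : Om // x < η} → ℕ)) := by
    rw [hj]; exact hf0 _
  refine ⟨β, hβ, ?_⟩
  show ∀ x : {x // x < η},
    (if h : (x : Om) < (f0 (j β).2).1 then (f0 (j β).2).2 ⟨x.1, h⟩ else 0) = g x
  rw [hfb]
  intro x
  exact dif_pos x.2

/-- Under CH there is a sequence ⟨p_η : η < ω₁⟩, p_η : η → ω, such that for every η < ω₁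
the set of restrictions {p_β ↾ η : β > η} is all of ω^η. -/
theorem sierpinski_sequence_of_CH
    (hCH : (2 : Cardinal) ^ Cardinal.aleph0 = Cardinal.aleph 1) :
    ∃ p : ∀ η : (Cardinal.aleph 1).ord.ToType, ({x // x < η} → ℕ),
      ∀ η : (Cardinal.aleph 1).ord.ToType, ∀ g : {x // x < η} → ℕ,
        ∃ β, ∃ hβ : η < β, ∀ x : {x // x < η}, p β ⟨x.1, x.2.trans hβ⟩ = g x :=
  sierpinski_aux (CH_transfer hCH)
end

section
/- Assume ♣(κ⁺) (stick at κ⁺): there is a sequence ⟨X_i : i < κ⁺⟩ with X_i ⊆ κ⁺, otp(X_i) = κ, such that every A ∈ [κ⁺]^{κ⁺} contains some X_i. Then for every sequence of partitions ⟨p_γ : γ < κ⁺⟩ with p_γ : [κ⁺]² → λ_γ and λ_γ < cf(κ), there exists a coloring f : [κ⁺]² → κ⁺ such that for every A, B ∈ [κ⁺]^{κ⁺} and every γ < κ⁺ there exist j < λ_γ and X ∈ [A]^κ such that f attains every color < κ⁺ on (X ⊛ B) ∩ p_γ⁻¹({j}). -/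
open Cardinal Set

universe u

/-- A system of distinct representatives for at most `κ` many sets, each of size at least `κ`. -/
lemma exists_injective_choice {T ι : Type u} {κ : Cardinal.{u}}
    (hι : #ι ≤ κ) (F : ι → Set T) (hF : ∀ i, κ ≤ #(F i)) :
    ∃ u : ι → T, Function.Injective u ∧ ∀ i, u i ∈ F i := by
  classical
  rcases isEmpty_or_nonempty ι with h | h
  · exact ⟨fun i => isEmptyElim i, fun i => isEmptyElim i, fun i => isEmptyElim i⟩
  have hT : Nonempty T := by
    obtain ⟨i⟩ := h
    have h1 : #(F i) ≠ 0 := by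
      have : #ι ≠ 0 := Cardinal.mk_ne_zero_iff.mpr ⟨i⟩
      intro h0
      exact this (le_antisymm (by simpa [h0] using le_trans hι (hF i)) (Cardinal.zero_le _))
    obtain ⟨t, _⟩ := Cardinal.mk_ne_zero_iff.mp h1
    exact ⟨t⟩
  obtain ⟨E⟩ : Nonempty (ι ↪ κ.ord.ToType) := by
    rw [← Cardinal.mk_ord_toType κ] at hι
    exact (Cardinal.le_def _ _).mp hι
  let P : κ.ord.ToType → (∀ z : κ.ord.ToType, T) → T → Prop := fun y pk t =>
    (∃ i, E i = y ∧ t ∈ F i) ∧ ∀ z, z < y → pk z ≠ t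
  let pick : κ.ord.ToType → T := WellFoundedLT.fix fun y ih =>
    Classical.epsilon fun t =>
      (∃ i, E i = y ∧ t ∈ F i) ∧ ∀ z, ∀ hz : z < y, ih z hz ≠ t
  have hfix : ∀ y, pick y = Classical.epsilon fun t =>
      (∃ i, E i = y ∧ t ∈ F i) ∧ ∀ z, ∀ _ : z < y, pick z ≠ t :=
    fun y => WellFoundedLT.fix_eq _ y
  have key : ∀ i : ι, pick (E i) ∈ F i ∧ ∀ z, z < E i → pick z ≠ pick (E i) := by
    intro i
    have hsat : ∃ t, (∃ i', E i' = E i ∧ t ∈ F i') ∧ ∀ z, ∀ _ : z < E i, pick z ≠ t := by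
      by_contra hc
      push_neg at hc
      have hsub : F i ⊆ pick '' Set.Iio (E i) := by
        intro t ht
        obtain ⟨z, hz, hzt⟩ := hc t ⟨i, rfl, ht⟩
        exact ⟨z, hz, hzt⟩
      have : κ ≤ #(Set.Iio (E i)) :=
        le_trans (hF i) (le_trans (mk_le_mk_of_subset hsub) (mk_image_le))
      exact absurd this (not_le.mpr (Cardinal.mk_Iio_ord_toType (E i)))
    have hspec := Classical.epsilon_spec hsat
    rw [← hfix (E i)] at hspec
    obtain ⟨⟨i', hi', hmem⟩, hne⟩ := hspec
    cases E.injective hi'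
    exact ⟨hmem, fun z hz => hne z hz⟩
  refine ⟨fun i => pick (E i), ?_, fun i => (key i).1⟩
  intro a b hab
  by_contra hne
  have hEne : E a ≠ E b := fun h => hne (E.injective h)
  rcases hEne.lt_or_gt with h | h
  · exact (key b).2 _ h hab
  · exact (key a).2 _ h hab.symm




/-- From ♣(κ⁺) (a stick sequence ⟨X_i : i < κ⁺⟩ of subsets of κ⁺ of order type κ such
that every A ∈ [κ⁺]^{κ⁺} contains some X_i), for every sequence of partitions
⟨p_γ : γ < κ⁺⟩ with p_γ : [κ⁺]² → λ_γ, λ_γ < cf(κ), there is a coloring f : [κ⁺]² → κ⁺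
such that for all A, B ∈ [κ⁺]^{κ⁺} and γ < κ⁺ there are j < λ_γ and X ∈ [A]^κ with f
attaining every color on (X ⊛ B) ∩ p_γ⁻¹{j}. Order type κ is expressed via a strictly
monotone enumeration e i : κ → κ⁺ of X i. -/
theorem stick_strong_coloring_over_partitions (κ : Cardinal) (hκ : Cardinal.aleph0 ≤ κ)
    (X : (Order.succ κ).ord.ToType → Set (Order.succ κ).ord.ToType)
    (e : (Order.succ κ).ord.ToType → κ.ord.ToType → (Order.succ κ).ord.ToType)
    (he : ∀ i, StrictMono (e i) ∧ X i = Set.range (e i))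
    (hstick : ∀ A : Set (Order.succ κ).ord.ToType,
      Cardinal.mk A = Order.succ κ → ∃ i, X i ⊆ A)
    (lam : (Order.succ κ).ord.ToType → Cardinal)
    (hlam : ∀ γ, lam γ < Ordinal.cof κ.ord)
    (p : ∀ γ, (Order.succ κ).ord.ToType → (Order.succ κ).ord.ToType → (lam γ).ord.ToType) :
    ∃ f : (Order.succ κ).ord.ToType → (Order.succ κ).ord.ToType → (Order.succ κ).ord.ToType,
      ∀ A B : Set (Order.succ κ).ord.ToType,
        Cardinal.mk A = Order.succ κ → Cardinal.mk B = Order.succ κ →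
        ∀ γ, ∃ j : (lam γ).ord.ToType, ∃ Y ⊆ A, Cardinal.mk Y = κ ∧
          ∀ c, ∃ α ∈ Y, ∃ β ∈ B, α < β ∧ p γ α β = j ∧ f α β = c := by
  classical
  have hκ1 : κ < Order.succ κ := Order.lt_succ κ
  have hreg : Cardinal.IsRegular (Order.succ κ) := Cardinal.isRegular_succ hκ
  have hcof : (Order.succ κ).ord.cof = Order.succ κ := hreg.cof_eq
  have hmkX : ∀ i, #(X i) = κ := by
    intro i
    rw [(he i).2, Cardinal.mk_range_eq _ (he i).1.injective, Cardinal.mk_ord_toType]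
  have hIio : ∀ b : (Order.succ κ).ord.ToType, #(Set.Iio b) ≤ κ := fun b =>
    Order.lt_succ_iff.mp (Cardinal.mk_Iio_ord_toType b)
  have hIic : ∀ b : (Order.succ κ).ord.ToType, #(Set.Iic b) ≤ κ := by
    intro b
    rw [← Set.Iio_insert]
    refine le_trans Cardinal.mk_insert_le ?_
    calc #(Set.Iio b) + 1 ≤ κ + 1 := add_le_add_left (hIio b) 1
      _ = κ := Cardinal.add_one_eq hκ
  -- big fibers
  have hbig : ∀ (β i γ : (Order.succ κ).ord.ToType),
      ∃ j : (lam γ).ord.ToType, κ ≤ #({α | α ∈ X i ∧ p γ α β = j} : Set _) := by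
    intro β i γ
    by_contra hc
    push_neg at hc
    have hUsub : X i ⊆ ⋃ j : (lam γ).ord.ToType, {α | α ∈ X i ∧ p γ α β = j} := fun α hα =>
      Set.mem_iUnion.mpr ⟨p γ α β, hα, rfl⟩
    have hsup : (⨆ j : (lam γ).ord.ToType, #({α | α ∈ X i ∧ p γ α β = j} : Set _)) < κ := by
      apply Ordinal.iSup_lt _ hc
      rw [Cardinal.mk_ord_toType]
      exact hlam γ
    have hlt : κ < κ := by
      calc κ = #(X i) := (hmkX i).symm
        _ ≤ #(⋃ j : (lam γ).ord.ToType, ({α | α ∈ X i ∧ p γ α β = j} : Set _)) :=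
            Cardinal.mk_le_mk_of_subset hUsub
        _ ≤ #((lam γ).ord.ToType) * ⨆ j : (lam γ).ord.ToType,
              #({α | α ∈ X i ∧ p γ α β = j} : Set _) := Cardinal.mk_iUnion_le _
        _ < κ := Cardinal.mul_lt_of_lt hκ
            (by rw [Cardinal.mk_ord_toType]; exact lt_of_lt_of_le (hlam γ) (Ordinal.cof_ord_le κ)) hsup
    exact hlt.false
  choose jsel hjsel using hbig
  -- for each β, a function realizing all colors below β on a big fiber
  have hg : ∀ β : (Order.succ κ).ord.ToType,
      ∃ g : (Order.succ κ).ord.ToType → (Order.succ κ).ord.ToType,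
      ∀ i γ, i < β → γ < β → X i ⊆ Set.Iio β →
        ∀ c, c < β → ∃ α, α ∈ X i ∧ α < β ∧ p γ α β = jsel β i γ ∧ g α = c := by
    intro β
    let S := {x : (Order.succ κ).ord.ToType × (Order.succ κ).ord.ToType × (Order.succ κ).ord.ToType //
      x.1 < β ∧ x.2.1 < β ∧ x.2.2 < β ∧ X x.1 ⊆ Set.Iio β}
    have hS : #S ≤ κ := by
      have hinj : #S ≤ #(↥(Set.Iio β) × ↥(Set.Iio β) × ↥(Set.Iio β)) := by
        apply Cardinal.mk_le_of_injective
          (f := fun x : S => ((⟨x.1.1, x.2.1⟩ : Set.Iio β),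
            (⟨x.1.2.1, x.2.2.1⟩ : Set.Iio β), (⟨x.1.2.2, x.2.2.2.1⟩ : Set.Iio β)))
        intro a b hab
        simp only [Prod.mk.injEq, Subtype.mk.injEq] at hab
        exact Subtype.ext (Prod.ext (congrArg Subtype.val hab.1) (Prod.ext (congrArg Subtype.val hab.2.1) (congrArg Subtype.val hab.2.2)))
      have hprod : #(↥(Set.Iio β) × ↥(Set.Iio β) × ↥(Set.Iio β)) ≤ κ := by
        simp only [Cardinal.mk_prod, Cardinal.lift_id]
        have hmul : κ * (κ * κ) = κ := by rw [Cardinal.mul_eq_self hκ, Cardinal.mul_eq_self hκ]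
        calc #(Set.Iio β) * (#(Set.Iio β) * #(Set.Iio β)) ≤ κ * (κ * κ) :=
              mul_le_mul' (hIio β) (mul_le_mul' (hIio β) (hIio β))
          _ = κ := hmul
      exact le_trans hinj hprod
    obtain ⟨u, huinj, humem⟩ := exists_injective_choice hS
      (fun x => {α | α ∈ X x.1.1 ∧ p x.1.2.1 α β = jsel β x.1.1 x.1.2.1})
      (fun x => hjsel β x.1.1 x.1.2.1)
    refine ⟨fun α => if h : ∃ x : S, u x = α then (Classical.choose h).1.2.2 else α, ?_⟩
    intro i γ hi hγ hXs c hc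
    have hx : ((i, γ, c) : _ × _ × _).1 < β ∧ ((i, γ, c) : _ × _ × _).2.1 < β ∧
        ((i, γ, c) : _ × _ × _).2.2 < β ∧ X ((i, γ, c) : _ × _ × _).1 ⊆ Set.Iio β :=
      ⟨hi, hγ, hc, hXs⟩
    set x : S := ⟨(i, γ, c), hx⟩ with hxdef
    obtain ⟨hmem1, hmem2⟩ := humem x
    refine ⟨u x, hmem1, hXs hmem1, hmem2, ?_⟩
    have hex : ∃ x' : S, u x' = u x := ⟨x, rfl⟩
    show (if h : ∃ x' : S, u x' = u x then (Classical.choose h).1.2.2 else u x) = c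
    rw [dif_pos hex]
    have hcx : Classical.choose hex = x := huinj (Classical.choose_spec hex)
    rw [hcx]
  choose g hgspec using hg
  refine ⟨fun α β => g β α, ?_⟩
  intro A B hA hB γ
  obtain ⟨i, hXA⟩ := hstick A hA
  haveI hJne : Nonempty ((lam γ).ord.ToType) := ⟨p γ i i⟩
  -- bound the set X i
  obtain ⟨s, hs⟩ : ∃ s, ∀ α ∈ X i, α < s := by
    have hbdd : Set.Bounded (· < ·) (X i) := by
      haveI : IsWellOrder (Order.succ κ).ord.ToType (· < ·) := isWellOrder_lt
      by_contra hnb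
      have hcf : IsCofinal (X i) := by
        intro x
        by_contra hx
        push_neg at hx
        exact hnb ⟨x, hx⟩
      have h2 := Ordinal.lt_cof_type hcf
      rw [Ordinal.cof_toType, hcof, hmkX i] at h2
      exact absurd hκ1 (not_lt.mpr h2)
    exact hbdd
  set m := max (max s i) γ with hm
  set B' := {β : (Order.succ κ).ord.ToType | β ∈ B ∧ m < β} with hB'def
  have hB'big : ¬ (#B' ≤ κ) := by
    intro hB'le
    have hsub : B ⊆ B' ∪ (B ∩ Set.Iic m) := by
      intro β hβ
      rcases le_or_gt β m with h | h
      · exact Or.inr ⟨hβ, h⟩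
      · exact Or.inl ⟨hβ, h⟩
    have hBle : #B ≤ κ := by
      calc #B ≤ #((B' ∪ (B ∩ Set.Iic m) : Set _)) := Cardinal.mk_le_mk_of_subset hsub
        _ ≤ #B' + #((B ∩ Set.Iic m : Set _)) := Cardinal.mk_union_le _ _
        _ ≤ κ + κ := add_le_add hB'le
            (le_trans (Cardinal.mk_le_mk_of_subset Set.inter_subset_right) (hIic m))
        _ = κ := Cardinal.add_eq_self hκ
    rw [hB] at hBle
    exact absurd hBle (not_le.mpr hκ1)
  -- pigeonhole on the value of jsel
  have hpigeon : ∃ j : (lam γ).ord.ToType, ¬ (#({β : B' | jsel β.1 i γ = j}) ≤ κ) := by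
    by_contra hc
    push_neg at hc
    have hU : (Set.univ : Set B') = ⋃ j : (lam γ).ord.ToType, {β : B' | jsel β.1 i γ = j} := by
      ext β
      simp only [Set.mem_univ, Set.mem_iUnion, Set.mem_setOf_eq, true_iff]
      exact ⟨jsel β.1 i γ, rfl⟩
    have hle : #B' ≤ κ := by
      calc #B' = #(Set.univ : Set B') := Cardinal.mk_univ.symm
        _ ≤ #((lam γ).ord.ToType) * ⨆ j : (lam γ).ord.ToType, #({β : B' | jsel β.1 i γ = j}) := by
            rw [hU]; exact Cardinal.mk_iUnion_le _
        _ ≤ κ * κ := mul_le_mul'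
            (by rw [Cardinal.mk_ord_toType]
                exact le_of_lt (lt_of_lt_of_le (hlam γ) (Ordinal.cof_ord_le κ)))
            (ciSup_le' hc)
        _ = κ := Cardinal.mul_eq_self hκ
    exact hB'big hle
  obtain ⟨j, hj⟩ := hpigeon
  have hunb : ∀ c, ∃ β : B', jsel β.1 i γ = j ∧ c < β.1 := by
    intro c
    by_contra hc
    push_neg at hc
    apply hj
    have hinj : #({β : B' | jsel β.1 i γ = j}) ≤ #(Set.Iic c) := by
      apply Cardinal.mk_le_of_injective
        (f := fun β : {β : B' | jsel β.1 i γ = j} => (⟨β.1.1, hc β.1 β.2⟩ : Set.Iic c))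
      intro a b hab
      simp only [Subtype.mk.injEq] at hab
      have hab' := Subtype.mk.inj hab
      exact Subtype.ext (Subtype.ext hab')
    exact le_trans hinj (hIic c)
  refine ⟨j, X i, hXA, hmkX i, ?_⟩
  intro c
  obtain ⟨⟨β, hβB, hβm⟩, hjβ, hcβ⟩ := hunb c
  have hsm : s ≤ m := le_trans (le_max_left s i) (le_max_left _ γ)
  have him : i < β := lt_of_le_of_lt (le_trans (le_max_right s i) (le_max_left _ γ)) hβm
  have hγm : γ < β := lt_of_le_of_lt (le_max_right _ γ) hβm
  have hXs : X i ⊆ Set.Iio β := fun α hα => lt_trans (hs α hα) (lt_of_le_of_lt hsm hβm)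
  obtain ⟨α, hαX, hαβ, hp, hgc⟩ := hgspec β i γ him hγm hXs c hcβ
  exact ⟨α, hαX, β, hβB, hαβ, hp.trans hjβ, hgc⟩
end

section
/- Suppose 2^κ = κ⁺ and the Erdős–Hajnal–Milner symbol holds: there is h : [κ⁺]² → (κ⁺)^κ such that for every B ∈ [κ⁺]^{κ⁺}, for all but fewer than κ ordinals α < κ⁺, h attains every value on {α} ⊛ B. Then for every sequence ⟨p_δ : δ < κ⁺⟩ of partitions p_δ : [κ⁺]² → κ, there is a single coloring f : [κ⁺]² → κ⁺ such that for every δ < κ⁺, every A ∈ [κ⁺]^κ, B ∈ [κ⁺]^{κ⁺}, and every ζ : κ → κ⁺, there is {α,β} ∈ A ⊛ B with f(α,β) = ζ(p_δ(α,β)). -/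
/-- Assume 2^κ = κ⁺ and the Erdős–Hajnal–Milner symbol: there is
h : [κ⁺]² → (κ⁺)^κ such that for every B ∈ [κ⁺]^{κ⁺} the set of α < κ⁺ for which h
fails to attain all values on {α} ⊛ B has size < κ. Then for every sequence
⟨p_δ : δ < κ⁺⟩ of κ-partitions of [κ⁺]² there is a single f : [κ⁺]² → κ⁺ strong on
(κ,κ⁺)-rectangles over every p_δ. -/
theorem ehm_over_partitions (κ : Cardinal) (hκ : Cardinal.aleph0 ≤ κ)
    (hGCH : (2 : Cardinal) ^ κ = Order.succ κ)
    (h : (Order.succ κ).ord.ToType → (Order.succ κ).ord.ToType →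
      (κ.ord.ToType → (Order.succ κ).ord.ToType))
    (hh : ∀ B : Set (Order.succ κ).ord.ToType, Cardinal.mk B = Order.succ κ →
      Cardinal.mk {α : (Order.succ κ).ord.ToType |
        ¬ ∀ s : κ.ord.ToType → (Order.succ κ).ord.ToType,
            ∃ β ∈ B, α < β ∧ h α β = s} < κ)
    (p : ∀ _ : (Order.succ κ).ord.ToType,
      (Order.succ κ).ord.ToType → (Order.succ κ).ord.ToType → κ.ord.ToType) :
    ∃ f : (Order.succ κ).ord.ToType → (Order.succ κ).ord.ToType → (Order.succ κ).ord.ToType,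
      ∀ δ, ∀ A B : Set (Order.succ κ).ord.ToType,
        Cardinal.mk A = κ → Cardinal.mk B = Order.succ κ →
        ∀ ζ : κ.ord.ToType → (Order.succ κ).ord.ToType,
          ∃ α ∈ A, ∃ β ∈ B, α < β ∧ f α β = ζ (p δ α β) := by
  have hκμ : κ < Order.succ κ := Order.lt_succ κ
  have hμ : Cardinal.aleph0 ≤ Order.succ κ := hκ.trans hκμ.le
  have hmkκ : Cardinal.mk κ.ord.ToType = κ := Cardinal.mk_ord_toType κ
  have hmkμ : Cardinal.mk (Order.succ κ).ord.ToType = Order.succ κ :=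
    Cardinal.mk_ord_toType _
  have hpow : (Order.succ κ) ^ κ = Order.succ κ := by
    rw [← hGCH, ← Cardinal.power_mul, Cardinal.mul_eq_self hκ, hGCH]
  have hfun : Cardinal.mk (κ.ord.ToType → (Order.succ κ).ord.ToType) = Order.succ κ := by
    rw [← Cardinal.power_def, hmkκ, hmkμ, hpow]
  have hprod : Cardinal.mk ((Order.succ κ).ord.ToType ×
      (κ.ord.ToType → (Order.succ κ).ord.ToType)) = Order.succ κ := by
    rw [Cardinal.mk_prod, Cardinal.lift_id, Cardinal.lift_id, hmkμ, hfun,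
      Cardinal.mul_eq_self hμ]
  obtain ⟨e⟩ : Nonempty ((κ.ord.ToType → (Order.succ κ).ord.ToType) ≃
      ((Order.succ κ).ord.ToType × (κ.ord.ToType → (Order.succ κ).ord.ToType))) :=
    Cardinal.eq.mp (hfun.trans hprod.symm)
  refine ⟨fun α β => (e (h α β)).2 ((p (e (h α β)).1) α β), ?_⟩
  intro δ A B hA hB ζ
  have hE := hh B hB
  have hns : ¬ A ⊆ {α : (Order.succ κ).ord.ToType |
      ¬ ∀ s : κ.ord.ToType → (Order.succ κ).ord.ToType, ∃ β ∈ B, α < β ∧ h α β = s} := by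
    intro hsub
    exact absurd (Cardinal.mk_le_mk_of_subset hsub) (by rw [hA]; exact not_le.mpr hE)
  obtain ⟨α, hαA, hαE⟩ := Set.not_subset.mp hns
  simp only [Set.mem_setOf_eq, not_not] at hαE
  obtain ⟨β, hβB, hαβ, hαβ2⟩ := hαE (e.symm (δ, ζ))
  refine ⟨α, hαA, β, hβB, hαβ, ?_⟩
  simp only [hαβ2, Equiv.apply_symm_apply]
end
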